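/- arXiv:2307.13112 — 3 statements merged into one kernel-verified Lean document; each statement's English description precedes it below -/
import Mathlib

section
/- Let B = [b_1, ..., b_k] be a 1×k integer matrix with k ≥ 1 such that ker(B) ∩ ℝ^k_{≥0} = {0}. Then the function p_B : ℤ → ℕ defined by p_B(b) = #{x ∈ ℕ^k : b_1 x_1 + ... + b_k x_k = b} restricted to the semigroup generated by the entries of B agrees with a polynomial of degree k−1 if and only if all entries of B are equal to a single nonzero integer β; in that case p_B(b) = C(b/β + k − 1, k − 1) for all b in the semigroup generated by β. -/
open Finset Polynomial

lemma polyDiff (P : ℚ[X]) (c : ℚ) (hc : c ≠ 0) (hd : 1 ≤ P.natDegree) :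
    (P - P.comp (X - C c)).natDegree = P.natDegree - 1 ∧
    (P - P.comp (X - C c)).leadingCoeff = P.natDegree * c * P.leadingCoeff := by
  set n := P.natDegree with hn
  have hq1 : (X - C c).natDegree = 1 := natDegree_X_sub_C c
  have hcompdeg : (P.comp (X - C c)).natDegree = n := by
    rw [natDegree_comp, hq1, mul_one]
  have hlc : (P.comp (X - C c)).leadingCoeff = P.leadingCoeff := by
    rw [leadingCoeff_comp (by rw [hq1]; norm_num), (monic_X_sub_C c).leadingCoeff, one_pow,
      mul_one]
  set D := P - P.comp (X - C c) with hD
  have hPlead : P.coeff n = P.leadingCoeff := by rw [hn]; rfl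
  have hcoeff : ∀ m : ℕ, (P.comp (X - C c)).coeff m
      = ∑ i ∈ Finset.range (n + 1), P.coeff i * ((-c) ^ (i - m) * (i.choose m : ℚ)) := by
    intro m
    have h1 : P.comp (X - C c) = ∑ i ∈ Finset.range (n + 1), C (P.coeff i) * (X - C c) ^ i := by
      rw [comp_eq_sum_left]
      exact P.sum_over_range' (by simp) (n+1) (by omega)
    rw [h1, finset_sum_coeff]
    refine Finset.sum_congr rfl fun i _ => ?_
    rw [coeff_C_mul, sub_eq_add_neg, ← C_neg, coeff_X_add_C_pow]
  have hccomp : (P.comp (X - C c)).coeff n = P.leadingCoeff := by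
    rw [← hlc, ← hcompdeg]; rfl
  have hcn : D.coeff n = 0 := by
    rw [hD, coeff_sub, hccomp, hPlead, sub_self]
  have hcm : ∀ m, n < m → D.coeff m = 0 := by
    intro m hm
    have h1 : P.coeff m = 0 := coeff_eq_zero_of_natDegree_lt (by omega)
    have h2 : (P.comp (X - C c)).coeff m = 0 := coeff_eq_zero_of_natDegree_lt (by omega)
    rw [hD, coeff_sub, h1, h2, sub_self]
  have hkey : D.coeff (n - 1) = n * c * P.leadingCoeff := by
    have hsum := hcoeff (n - 1)
    have hsplit : Finset.range (n + 1) = Finset.range ((n-1) + 1 + 1) := by congr 1; omega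
    rw [hsplit, Finset.sum_range_succ] at hsum
    have hzero : ∀ i ∈ Finset.range ((n-1)+1), i ≠ n - 1 →
        P.coeff i * ((-c) ^ (i - (n-1)) * (i.choose (n-1) : ℚ)) = 0 := by
      intro i hi hne
      rw [Finset.mem_range] at hi
      have : i.choose (n-1) = 0 := Nat.choose_eq_zero_of_lt (by omega)
      simp [this]
    rw [Finset.sum_eq_single_of_mem (n-1) (by simp) hzero] at hsum
    have e1 : (n-1) - (n-1) = 0 := by omega
    have e2 : (n-1) + 1 - (n-1) = 1 := by omega
    have hlast : n - 1 + 1 = n := by omega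
    rw [e1, e2, Nat.choose_succ_self_right, Nat.choose_self, hlast] at hsum
    rw [hD, coeff_sub, hsum, hPlead]
    push_cast
    ring
  have hle : D.natDegree ≤ n - 1 := by
    rw [natDegree_le_iff_coeff_eq_zero]
    intro m hm
    rcases eq_or_lt_of_le (show n ≤ m by omega) with h | h
    · rw [← h]; exact hcn
    · exact hcm m h
  have hne : D.coeff (n - 1) ≠ 0 := by
    rw [hkey]
    have h1 : (n : ℚ) ≠ 0 := by positivity
    have hP : P.leadingCoeff ≠ 0 := by
      apply leadingCoeff_ne_zero.mpr
      intro h; rw [h] at hn; simp at hn; omega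
    exact mul_ne_zero (mul_ne_zero h1 hc) hP
  have hdeg : D.natDegree = n - 1 := le_antisymm hle (le_natDegree_of_ne_zero hne)
  exact ⟨hdeg, by rw [leadingCoeff, hdeg, hkey]⟩
lemma sumPowersetEval {k : ℕ} (c : Fin k → ℚ) :
    ∀ (I : Finset (Fin k)), (∀ i ∈ I, c i ≠ 0) → ∀ (P : ℚ[X]), P.natDegree = I.card →
    ∀ x : ℚ, ∑ T ∈ I.powerset, (-1:ℚ)^T.card * P.eval (x - ∑ i ∈ T, c i)
      = I.card.factorial * P.leadingCoeff * ∏ i ∈ I, c i := by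
  intro I
  induction I using Finset.induction_on with
  | empty =>
    intro _ P hP x
    obtain ⟨a, ha⟩ := Polynomial.natDegree_eq_zero.mp hP
    simp [← ha]
  | @insert m I' hm ih =>
    intro hc P hP x
    rw [Finset.sum_powerset_insert hm]
    have hcard : (insert m I').card = I'.card + 1 := Finset.card_insert_of_notMem hm
    rw [hcard] at hP
    have hcm : c m ≠ 0 := hc m (Finset.mem_insert_self m I')
    obtain ⟨hDdeg, hDlc⟩ := polyDiff P (c m) hcm (by omega)
    set D := P - P.comp (X - C (c m)) with hDdef
    have hstep : ∀ T ∈ I'.powerset,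
        (-1:ℚ)^T.card * P.eval (x - ∑ i ∈ T, c i)
          + (-1:ℚ)^(insert m T).card * P.eval (x - ∑ i ∈ insert m T, c i)
        = (-1:ℚ)^T.card * D.eval (x - ∑ i ∈ T, c i) := by
      intro T hT
      rw [Finset.mem_powerset] at hT
      have hmT : m ∉ T := fun h => hm (hT h)
      rw [Finset.card_insert_of_notMem hmT, Finset.sum_insert hmT]
      have : D.eval (x - ∑ i ∈ T, c i)
          = P.eval (x - ∑ i ∈ T, c i) - P.eval (x - ∑ i ∈ T, c i - c m) := by
        simp [hDdef, eval_comp]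
      rw [this]
      have : x - (c m + ∑ i ∈ T, c i) = x - ∑ i ∈ T, c i - c m := by ring
      rw [this, pow_succ]
      ring
    have hcomb : ∑ t ∈ I'.powerset, (-1:ℚ)^t.card * P.eval (x - ∑ i ∈ t, c i)
        + ∑ t ∈ I'.powerset, (-1:ℚ)^(insert m t).card * P.eval (x - ∑ i ∈ insert m t, c i)
        = ∑ t ∈ I'.powerset, (-1:ℚ)^t.card * D.eval (x - ∑ i ∈ t, c i) := by
      rw [← Finset.sum_add_distrib]; exact Finset.sum_congr rfl hstep
    rw [hcomb, ih (fun i hi => hc i (Finset.mem_insert_of_mem hi)) D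
      (by rw [hDdeg, hP]; omega) x]
    rw [hDlc, hcard, Finset.prod_insert hm, hP, Nat.factorial_succ]
    push_cast
    ring

variable {k : ℕ}

def SolSet (B : Fin k → ℤ) (J : Finset (Fin k)) (b : ℤ) : Set (Fin k → ℕ) :=
  {x | (∀ i ∉ J, x i = 0) ∧ ∑ i, B i * (x i : ℤ) = b}

lemma solset_bound {B : Fin k → ℤ} {s : ℤ} (hs : ∀ i, 1 ≤ s * B i) {b : ℤ}
    {x : Fin k → ℕ} (hx : ∑ i, B i * (x i : ℤ) = b) (i : Fin k) : (x i : ℤ) ≤ s * b := by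
  have hsum : ∑ j, (s * B j) * (x j : ℤ) = s * b := by
    rw [← hx, Finset.mul_sum]
    exact Finset.sum_congr rfl fun j _ => by ring
  have h1 : (s * B i) * (x i : ℤ) ≤ s * b := by
    rw [← hsum]
    refine Finset.single_le_sum (f := fun j => (s * B j) * (x j : ℤ)) (fun j _ => ?_) (Finset.mem_univ i)
    have := hs j
    positivity
  calc (x i : ℤ) = 1 * (x i : ℤ) := by ring
  _ ≤ (s * B i) * (x i : ℤ) := by
      apply mul_le_mul_of_nonneg_right (hs i) (by positivity)
  _ ≤ s * b := h1

lemma solset_finite {B : Fin k → ℤ} {s : ℤ} (hs : ∀ i, 1 ≤ s * B i) (J : Finset (Fin k))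
    (b : ℤ) : (SolSet B J b).Finite := by
  apply Set.Finite.subset (Set.Finite.pi (fun i : Fin k => Set.finite_Iic (s * b).toNat))
  intro x hx
  rw [Set.mem_pi]
  intro i _
  have h1 := solset_bound hs hx.2 i
  have h0 : (0 : ℤ) ≤ s * b := le_trans (by positivity) h1
  simp only [Set.mem_Iic]
  exact (Int.le_toNat h0).mpr h1

lemma sum_shift (B : Fin k → ℤ) (x : Fin k → ℕ) (m : Fin k) (c : ℕ) :
    ∑ i, B i * ((Function.update x m c) i : ℤ)
      = (∑ i, B i * (x i : ℤ)) + B m * ((c : ℤ) - (x m : ℤ)) := by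
  rw [Fintype.sum_eq_add_sum_compl m, Fintype.sum_eq_add_sum_compl m fun i => B i * (x i : ℤ)]
  rw [Function.update_self]
  have : ∑ i ∈ {m}ᶜ, B i * ((Function.update x m c) i : ℤ)
      = ∑ i ∈ {m}ᶜ, B i * (x i : ℤ) := by
    refine Finset.sum_congr rfl fun i hi => ?_
    rw [Function.update_of_ne (by simpa using hi)]
  rw [this]
  ring

lemma solset_recur {B : Fin k → ℤ} {s : ℤ} (hs : ∀ i, 1 ≤ s * B i) {m : Fin k}
    {K : Finset (Fin k)} (hm : m ∉ K) (b : ℤ) :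
    (SolSet B (insert m K) b).ncard
      = (SolSet B K b).ncard + (SolSet B (insert m K) (b - B m)).ncard := by
  classical
  set f : (Fin k → ℕ) → (Fin k → ℕ) := fun y => Function.update y m (y m + 1) with hf
  have hinj : Function.Injective f := by
    intro y z h
    funext i
    by_cases hi : i = m
    · subst hi
      have := congrFun h i
      simpa [hf] using this
    · have := congrFun h i
      simpa [hf, Function.update_of_ne hi] using this
  have hsplit : SolSet B (insert m K) b = SolSet B K b ∪ f '' (SolSet B (insert m K) (b - B m)) := by
    ext x
    constructor
    · rintro ⟨hsupp, hsum⟩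
      by_cases hx : x m = 0
      · left
        refine ⟨fun i hi => ?_, hsum⟩
        by_cases him : i = m
        · subst him; exact hx
        · exact hsupp i (by simp [him, hi])
      · right
        refine ⟨Function.update x m (x m - 1), ⟨fun i hi => ?_, ?_⟩, ?_⟩
        · have him : i ≠ m := by rintro rfl; exact hi (Finset.mem_insert_self _ _)
          rw [Function.update_of_ne him]
          exact hsupp i hi
        · rw [sum_shift, hsum]
          have hx1 : 1 ≤ x m := Nat.one_le_iff_ne_zero.mpr hx
          push_cast [Nat.cast_sub hx1]
          ring
        · funext i
          by_cases him : i = m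
          · subst him
            simp only [hf, Function.update_self]
            omega
          · simp [hf, Function.update_of_ne him]
    · rintro (⟨hsupp, hsum⟩ | ⟨y, ⟨hsupp, hsum⟩, rfl⟩)
      · exact ⟨fun i hi => hsupp i (fun h => hi (Finset.mem_insert_of_mem h)), hsum⟩
      · constructor
        · intro i hi
          have him : i ≠ m := by rintro rfl; exact hi (Finset.mem_insert_self _ _)
          rw [hf]
          simp only [Function.update_of_ne him]
          exact hsupp i hi
        · rw [hf]
          simp only
          rw [sum_shift, hsum]
          push_cast
          ring
  have hdisj : Disjoint (SolSet B K b) (f '' (SolSet B (insert m K) (b - B m))) := by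
    rw [Set.disjoint_left]
    rintro x ⟨hsupp, _⟩ ⟨y, _, rfl⟩
    have : f y m = y m + 1 := by simp [hf]
    have hx0 : f y m = 0 := hsupp m hm
    omega
  rw [hsplit, Set.ncard_union_eq hdisj (solset_finite hs _ _)
    ((solset_finite hs _ _).image f), Set.ncard_image_of_injective _ hinj]

lemma solset_base {B : Fin k → ℤ} {j : Fin k} (hBj : B j ≠ 0) (n : ℕ) :
    (SolSet B {j} (B j * n)).ncard = 1 := by
  classical
  have : SolSet B {j} (B j * n) = {fun i => if i = j then n else 0} := by
    ext x
    constructor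
    · rintro ⟨hsupp, hsum⟩
      have hx : ∀ i, i ≠ j → x i = 0 := fun i hi => hsupp i (by simp [hi])
      have hsum' : ∑ i, B i * (x i : ℤ) = B j * (x j : ℤ) := by
        refine Finset.sum_eq_single j (fun i _ hi => by rw [hx i hi]; simp) (by simp)
      rw [hsum'] at hsum
      have : (x j : ℤ) = n := mul_left_cancel₀ hBj hsum
      have hxj : x j = n := by exact_mod_cast this
      funext i
      by_cases hi : i = j
      · subst hi; simp [hxj]
      · simp [hi, hx i hi]
    · rintro rfl
      refine ⟨fun i hi => by simp at hi; simp [hi], ?_⟩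
      rw [Finset.sum_eq_single j (fun i _ hi => by simp [hi]) (by simp)]
      simp
  rw [this, Set.ncard_singleton]

lemma solset_L1 {B : Fin k → ℤ} {s : ℤ} (hs : ∀ i, 1 ≤ s * B i) :
    ∀ I : Finset (Fin k), ∀ J : Finset (Fin k), Disjoint I J → ∀ b : ℤ,
    ∑ T ∈ I.powerset, (-1:ℚ)^T.card * ((SolSet B (J ∪ I) (b - ∑ i ∈ T, B i)).ncard : ℚ)
      = (SolSet B J b).ncard := by
  classical
  intro I
  induction I using Finset.induction_on with
  | empty => intro J _ b; simp
  | @insert m I' hm ih =>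
    intro J hd b
    rw [Finset.sum_powerset_insert hm]
    have hmJ : m ∉ J := fun h =>
      (Finset.disjoint_left.mp hd (Finset.mem_insert_self m I')) h
    have hmJI : m ∉ J ∪ I' := by simp [hmJ, hm]
    have hunion : J ∪ insert m I' = insert m (J ∪ I') := by
      rw [Finset.union_insert]
    have hstep : ∀ T ∈ I'.powerset,
        (-1:ℚ)^T.card * ((SolSet B (J ∪ insert m I') (b - ∑ i ∈ T, B i)).ncard : ℚ)
          + (-1:ℚ)^(insert m T).card
            * ((SolSet B (J ∪ insert m I') (b - ∑ i ∈ insert m T, B i)).ncard : ℚ)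
        = (-1:ℚ)^T.card * ((SolSet B (J ∪ I') (b - ∑ i ∈ T, B i)).ncard : ℚ) := by
      intro T hT
      rw [Finset.mem_powerset] at hT
      have hmT : m ∉ T := fun h => hm (hT h)
      rw [Finset.card_insert_of_notMem hmT, Finset.sum_insert hmT, hunion]
      have hrec := solset_recur hs hmJI (b - ∑ i ∈ T, B i)
      have heq : b - (B m + ∑ i ∈ T, B i) = b - ∑ i ∈ T, B i - B m := by ring
      rw [heq, pow_succ]
      have hq : ((SolSet B (insert m (J ∪ I')) (b - ∑ i ∈ T, B i)).ncard : ℚ)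
          = ((SolSet B (J ∪ I') (b - ∑ i ∈ T, B i)).ncard : ℚ)
            + ((SolSet B (insert m (J ∪ I')) (b - ∑ i ∈ T, B i - B m)).ncard : ℚ) := by
        exact_mod_cast hrec
      rw [hq]
      ring
    have hcomb : ∑ T ∈ I'.powerset,
          (-1:ℚ)^T.card * ((SolSet B (J ∪ insert m I') (b - ∑ i ∈ T, B i)).ncard : ℚ)
        + ∑ T ∈ I'.powerset, (-1:ℚ)^(insert m T).card
            * ((SolSet B (J ∪ insert m I') (b - ∑ i ∈ insert m T, B i)).ncard : ℚ)
        = ∑ T ∈ I'.powerset,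
            (-1:ℚ)^T.card * ((SolSet B (J ∪ I') (b - ∑ i ∈ T, B i)).ncard : ℚ) := by
      rw [← Finset.sum_add_distrib]; exact Finset.sum_congr rfl hstep
    rw [hcomb, ih J (Finset.disjoint_of_subset_left (Finset.subset_insert m I') hd) b]
lemma solset_univ_card (B : Fin k → ℤ) (b : ℤ) :
    (SolSet B Finset.univ b).ncard
      = Nat.card {x : Fin k → ℕ // ∑ i, B i * (x i : ℤ) = b} := by
  rw [← Nat.card_coe_set_eq]
  apply Nat.card_congr
  exact (Equiv.subtypeEquivRight (fun x => by simp [SolSet])).symm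

lemma forward_eq (B : Fin k → ℤ) (s : ℤ) (hs2 : s = 1 ∨ s = -1) (hs : ∀ i, 1 ≤ s * B i)
    (P : Polynomial ℚ) (hdeg : P.natDegree = k - 1)
    (heval : ∀ b : ℤ, (∃ x : Fin k → ℕ, ∑ i, B i * (x i : ℤ) = b) →
      ((Nat.card {x : Fin k → ℕ // ∑ i, B i * (x i : ℤ) = b} : ℚ) = P.eval (b : ℚ)))
    (j : Fin k) :
    ((k-1).factorial : ℚ) * P.leadingCoeff * ∏ i ∈ Finset.univ.erase j, (B i : ℚ) = 1 := by
  classical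
  have hBnz : ∀ i, B i ≠ 0 := by
    intro i h
    have := hs i
    rw [h, mul_zero] at this
    omega
  set I : Finset (Fin k) := Finset.univ.erase j with hIdef
  have hI : I.card = k - 1 := by
    rw [hIdef, Finset.card_erase_of_mem (Finset.mem_univ j), Finset.card_univ, Fintype.card_fin]
  set c : ℤ := ∑ i ∈ I, B i with hcdef
  have hsc : 0 ≤ s * c := by
    rw [hcdef, Finset.mul_sum]
    exact Finset.sum_nonneg fun i _ => le_trans zero_le_one (hs i)
  set nstar : ℕ := (s * c).toNat with hnstardef
  have hnstar : (nstar : ℤ) = s * c := Int.toNat_of_nonneg hsc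
  set w : ℕ := (s * B j).toNat with hwdef
  have hw : (w : ℤ) = s * B j := Int.toNat_of_nonneg (le_trans zero_le_one (hs j))
  have hw1 : 1 ≤ w := by
    have := hs j
    omega
  have hss : s * s = 1 := by rcases hs2 with h | h <;> rw [h] <;> ring
  set bstar : ℤ := B j * nstar with hbstardef
  have hbw : (w : ℤ) * c = bstar := by
    rw [hbstardef, hw, hnstar]
    ring
  -- step A
  have hA := sumPowersetEval (fun i => (B i : ℚ)) I
    (fun i _ h => hBnz i (by exact_mod_cast (show ((B i : ℚ)) = 0 from h))) P (by rw [hdeg, hI]) (bstar : ℚ)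
  -- step B
  have hdisj : Disjoint I ({j} : Finset (Fin k)) :=
    Finset.disjoint_singleton_right.mpr (Finset.notMem_erase j Finset.univ)
  have hB := solset_L1 hs I {j} hdisj bstar
  have hset : ({j} : Finset (Fin k)) ∪ I = Finset.univ := by
    rw [← Finset.insert_eq, hIdef, Finset.insert_erase (Finset.mem_univ j)]
  rw [hset] at hB
  have hbase : ((SolSet B {j} bstar).ncard : ℚ) = 1 := by
    rw [hbstardef, solset_base (hBnz j) nstar]
    norm_num
  rw [hbase] at hB
  -- step C : identify terms
  have hC : ∀ T ∈ I.powerset,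
      (-1:ℚ)^T.card * ((SolSet B Finset.univ (bstar - ∑ i ∈ T, B i)).ncard : ℚ)
        = (-1:ℚ)^T.card * P.eval ((bstar : ℚ) - ∑ i ∈ T, (B i : ℚ)) := by
    intro T hT
    rw [Finset.mem_powerset] at hT
    have hjT : j ∉ T := fun h => Finset.notMem_erase j Finset.univ (hT h)
    congr 1
    have hrep : ∃ x : Fin k → ℕ, ∑ i, B i * (x i : ℤ) = bstar - ∑ i ∈ T, B i := by
      refine ⟨fun i => if i = j then 0 else w - (if i ∈ T then 1 else 0), ?_⟩
      rw [Fintype.sum_eq_add_sum_compl j, Finset.compl_singleton]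
      simp only [if_pos rfl]
      have hterm : ∀ i ∈ Finset.univ.erase j,
          B i * (((if i = j then 0 else w - (if i ∈ T then 1 else 0)) : ℕ) : ℤ)
            = (w : ℤ) * B i - (if i ∈ T then B i else 0) := by
        intro i hi
        have hij : i ≠ j := Finset.ne_of_mem_erase hi
        rw [if_neg hij]
        have hle : (if i ∈ T then 1 else 0) ≤ w := by
          split <;> omega
        rw [Nat.cast_sub hle]
        split <;> push_cast <;> ring
      have hsub : ∑ i ∈ Finset.univ.erase j, (if i ∈ T then B i else 0) = ∑ i ∈ T, B i := by
        rw [Finset.sum_ite_mem, Finset.inter_eq_right.mpr hT]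
      rw [Finset.sum_congr rfl hterm, Finset.sum_sub_distrib, ← Finset.mul_sum, hsub,
        ← hIdef, ← hcdef, hbw]
      norm_num
    rw [solset_univ_card, heval _ hrep]
    push_cast
    ring_nf
  rw [Finset.sum_congr rfl hC, hA, hI] at hB
  exact hB

lemma sign_lemma {k : ℕ} (hk : 1 ≤ k) (B : Fin k → ℤ)
    (hker : ∀ x : Fin k → ℝ, (∀ i, 0 ≤ x i) → (∑ i, (B i : ℝ) * x i = 0) → x = 0) :
    ∃ s : ℤ, (s = 1 ∨ s = -1) ∧ ∀ i, 1 ≤ s * B i := by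
  classical
  have hnz : ∀ i, B i ≠ 0 := by
    intro i h
    have h1 := hker (fun t => if t = i then 1 else 0)
      (fun t => by split <;> norm_num)
      (by
        refine Finset.sum_eq_zero fun t _ => ?_
        by_cases ht : t = i
        · subst ht; rw [h]; simp
        · simp [ht])
    have := congrFun h1 i
    simp at this
  have hopp : ∀ i i', 0 < B i → B i' < 0 → False := by
    intro i i' hi hi'
    have hii' : i ≠ i' := by rintro rfl; omega
    have hBi : (0:ℝ) < (B i : ℝ) := by exact_mod_cast hi
    have hBi' : ((B i' : ℝ)) < 0 := by exact_mod_cast hi'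
    set x : Fin k → ℝ := fun t => if t = i then (-(B i' : ℝ)) else if t = i' then (B i : ℝ) else 0
      with hx
    have hnn : ∀ t, 0 ≤ x t := by
      intro t
      rw [hx]
      dsimp only
      split
      · linarith
      · split
        · linarith
        · exact le_refl 0
    have hsum : ∑ t, (B t : ℝ) * x t = 0 := by
      have hzero : ∀ t ∈ Finset.univ, t ∉ ({i, i'} : Finset (Fin k)) → (B t : ℝ) * x t = 0 := by
        intro t _ ht
        simp only [Finset.mem_insert, Finset.mem_singleton] at ht
        push_neg at ht
        rw [hx]
        dsimp only
        rw [if_neg ht.1, if_neg ht.2, mul_zero]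
      rw [← Finset.sum_subset (Finset.subset_univ ({i, i'} : Finset (Fin k))) hzero,
        Finset.sum_pair hii']
      rw [hx]
      dsimp only
      rw [if_pos rfl, if_neg (Ne.symm hii'), if_pos rfl]
      ring
    have := congrFun (hker x hnn hsum) i
    rw [hx] at this
    dsimp only at this
    rw [if_pos rfl, Pi.zero_apply] at this
    linarith
  set i0 : Fin k := ⟨0, hk⟩ with hi0
  rcases lt_trichotomy (B i0) 0 with h0 | h0 | h0
  · refine ⟨-1, Or.inr rfl, fun i => ?_⟩
    rcases lt_trichotomy (B i) 0 with h | h | h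
    · omega
    · exact absurd h (hnz i)
    · exact absurd (hopp i i0 h h0) not_false
  · exact absurd h0 (hnz i0)
  · refine ⟨1, Or.inl rfl, fun i => ?_⟩
    rcases lt_trichotomy (B i) 0 with h | h | h
    · exact absurd (hopp i0 i h0 h) not_false
    · exact absurd h (hnz i)
    · omega

lemma stars_bars (k m : ℕ) (hk : 1 ≤ k) :
    Nat.card {x : Fin k → ℕ // ∑ i, x i = m} = (m + (k - 1)).choose (k - 1) := by
  classical
  rw [Nat.card_congr (Sym.equivNatSumOfFintype (Fin k) m).symm, Nat.card_eq_fintype_card,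
    Sym.card_sym_eq_choose, Fintype.card_fin]
  have h1 : k + m - 1 = m + (k - 1) := by omega
  have h2 : m + (k - 1) - m = k - 1 := by omega
  have h3 := Nat.choose_symm (Nat.le_add_right m (k - 1))
  rw [h2] at h3
  rw [h1, ← h3]

lemma part2_lemma {k : ℕ} (hk : 1 ≤ k) (β : ℤ) (hβ : β ≠ 0) (B : Fin k → ℤ)
    (hB : ∀ i, B i = β) (m : ℕ) :
    Nat.card {x : Fin k → ℕ // ∑ i, B i * (x i : ℤ) = β * m} = (m + (k - 1)).choose (k - 1) := by
  rw [Nat.card_congr (Equiv.subtypeEquivRight (q := fun x : Fin k → ℕ => ∑ i, x i = m)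
    (fun x => ?_)), stars_bars k m hk]
  simp_rw [hB]
  rw [← Finset.mul_sum, mul_right_inj' hβ, ← Nat.cast_sum]
  exact Nat.cast_inj

lemma backward_poly {k : ℕ} (hk : 1 ≤ k) (β : ℤ) (hβ : β ≠ 0) (B : Fin k → ℤ)
    (hB : ∀ i, B i = β) :
    ∃ P : Polynomial ℚ, P.natDegree = k - 1 ∧
      ∀ b : ℤ, (∃ x : Fin k → ℕ, ∑ i, B i * (x i : ℤ) = b) →
        ((Nat.card {x : Fin k → ℕ // ∑ i, B i * (x i : ℤ) = b} : ℚ) = P.eval (b : ℚ)) := by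
  have hβq : ((β : ℚ)) ≠ 0 := Int.cast_ne_zero.mpr hβ
  have hfac : (((k-1).factorial : ℚ)) ≠ 0 := Nat.cast_ne_zero.mpr (Nat.factorial_ne_zero _)
  refine ⟨C (((k-1).factorial : ℚ))⁻¹
    * ((ascPochhammer ℚ (k-1)).comp (C ((β:ℚ))⁻¹ * X + C 1)), ?_, ?_⟩
  · rw [natDegree_C_mul (inv_ne_zero hfac), natDegree_comp, ascPochhammer_natDegree,
      natDegree_linear (inv_ne_zero hβq), mul_one]
  · rintro b ⟨x, hx⟩
    set M : ℕ := ∑ i, x i with hM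
    have hbM : b = β * M := by
      rw [← hx]
      simp_rw [hB]
      rw [← Finset.mul_sum, hM, Nat.cast_sum]
    subst hbM
    rw [part2_lemma hk β hβ B hB M]
    rw [eval_mul, eval_C, eval_comp, eval_add, eval_mul, eval_C, eval_X, eval_C]
    have harg : ((β:ℚ))⁻¹ * (((β * M : ℤ) : ℚ)) + 1 = ((M + 1 : ℕ) : ℚ) := by
      push_cast
      field_simp
    rw [harg, ← Nat.cast_ascFactorial, Nat.ascFactorial_eq_factorial_mul_choose M (k-1)]
    push_cast
    rw [← mul_assoc, inv_mul_cancel₀ hfac, one_mul]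

/-- The coin-exchange counting function `p_B` for a `1 × k` integer matrix `B`,
restricted to the semigroup generated by its entries, agrees with a polynomial of
degree `k - 1` iff all entries equal a single nonzero integer `β`; and in that case
`p_B (β m) = C(m + k - 1, k - 1)`. -/
theorem stmt1 (k : ℕ) (hk : 1 ≤ k) (B : Fin k → ℤ)
    (hker : ∀ x : Fin k → ℝ, (∀ i, 0 ≤ x i) → (∑ i, (B i : ℝ) * x i = 0) → x = 0) :
    ((∃ P : Polynomial ℚ, P.natDegree = k - 1 ∧
        ∀ b : ℤ, (∃ x : Fin k → ℕ, ∑ i, B i * (x i : ℤ) = b) →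
          ((Nat.card {x : Fin k → ℕ // ∑ i, B i * (x i : ℤ) = b} : ℚ) = P.eval (b : ℚ))) ↔
      ∃ β : ℤ, β ≠ 0 ∧ ∀ i, B i = β) ∧
    (∀ β : ℤ, β ≠ 0 → (∀ i, B i = β) → ∀ m : ℕ,
      Nat.card {x : Fin k → ℕ // ∑ i, B i * (x i : ℤ) = β * m} =
        (m + (k - 1)).choose (k - 1)) := by
  obtain ⟨s, hs2, hs⟩ := sign_lemma hk B hker
  constructor
  · constructor
    · rintro ⟨P, hdeg, heval⟩
      have key : ∀ j : Fin k, ((k-1).factorial : ℚ) * P.leadingCoeff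
          * ∏ i ∈ Finset.univ.erase j, (B i : ℚ) = 1 :=
        fun j => forward_eq B s hs2 hs P hdeg heval j
      set j0 : Fin k := ⟨0, hk⟩ with hj0
      refine ⟨B j0, ?_, fun i => ?_⟩
      · intro h
        have := hs j0
        rw [h, mul_zero] at this
        omega
      · have h1 := key i
        have h2 := key j0
        set F : ℚ := ((k-1).factorial : ℚ) * P.leadingCoeff with hF
        have hFne : F ≠ 0 := by
          intro h
          rw [h, zero_mul] at h1
          norm_num at h1
        have hpe : (∏ t ∈ Finset.univ.erase i, (B t : ℚ))
            = ∏ t ∈ Finset.univ.erase j0, (B t : ℚ) :=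
          mul_left_cancel₀ hFne (h1.trans h2.symm)
        have hXne : (∏ t ∈ Finset.univ.erase i, (B t : ℚ)) ≠ 0 := by
          intro h
          rw [h, mul_zero] at h1
          norm_num at h1
        have hu1 : (B i : ℚ) * ∏ t ∈ Finset.univ.erase i, (B t : ℚ)
            = ∏ t ∈ Finset.univ, (B t : ℚ) :=
          Finset.mul_prod_erase Finset.univ (fun t => (B t : ℚ)) (Finset.mem_univ i)
        have hu2 : (B j0 : ℚ) * ∏ t ∈ Finset.univ.erase j0, (B t : ℚ)
            = ∏ t ∈ Finset.univ, (B t : ℚ) :=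
          Finset.mul_prod_erase Finset.univ (fun t => (B t : ℚ)) (Finset.mem_univ j0)
        have : (B i : ℚ) * ∏ t ∈ Finset.univ.erase i, (B t : ℚ)
            = (B j0 : ℚ) * ∏ t ∈ Finset.univ.erase i, (B t : ℚ) := by
          rw [hu1, ← hu2, hpe]
        have hBq : (B i : ℚ) = (B j0 : ℚ) := mul_right_cancel₀ hXne this
        exact_mod_cast hBq
    · rintro ⟨β, hβ, hB⟩
      exact backward_poly hk β hβ B hB
  · intro β hβ hB m
    exact part2_lemma hk β hβ B hB m
end

section
/- Let A be a d×n unimodular matrix of rank d (every d×d minor is in {−1, 0, 1}), let f be a facet of the cone pos_ℝ(A) with minimal inner facet normal ι ∈ ℤ^d (i.e., ι has coprime entries, ι·x ≥ 0 for all x ∈ pos_ℝ(A), and f = pos_ℝ(A) ∩ {x : ι·x = 0}). Then for every column c of A: ι·c = 0 if c ∈ f, and ι·c = 1 if c ∉ f. -/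
open Finset

/-- The cone of nonnegative real combinations of the vectors `v i` for `i` in `s`. -/
def posCone {d n : ℕ} (v : Fin n → (Fin d → ℝ)) (s : Set (Fin n)) : Set (Fin d → ℝ) :=
  {x | ∃ lam : Fin n → ℝ, (∀ i, 0 ≤ lam i) ∧ (∀ i ∉ s, lam i = 0) ∧ x = ∑ i, lam i • v i}

lemma bezout_fin {α : Type*} [DecidableEq α] (s : Finset α) (f : α → ℤ) :
    ∃ c : α → ℤ, ∑ i ∈ s, c i * f i = s.gcd f := by
  induction s using Finset.induction_on with
  | empty => exact ⟨0, by simp⟩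
  | @insert a s ha ih =>
      obtain ⟨c, hc⟩ := ih
      set X := Int.gcdA (f a) (s.gcd f) with hX
      set Y := Int.gcdB (f a) (s.gcd f) with hY
      refine ⟨fun i => if i = a then X else Y * c i, ?_⟩
      have h1 : ∑ i ∈ s, (if i = a then X else Y * c i) * f i
          = Y * ∑ i ∈ s, c i * f i := by
        rw [Finset.mul_sum]
        exact Finset.sum_congr rfl fun i hi => by
          rw [if_neg (show i ≠ a by rintro rfl; exact ha hi)]; ring
      rw [Finset.sum_insert ha, h1, hc]
      simp only [if_pos rfl]
      rw [Finset.gcd_insert,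
        ← Int.coe_gcd, Int.gcd_eq_gcd_ab, ← hX, ← hY]
      simp only [if_true]
      ring


/-- For a unimodular matrix `A` and a facet `f` of `pos_ℝ(A)` with minimal inner facet
normal `ι`, every column `c` of `A` satisfies `ι·c = 0` if `c ∈ f` and `ι·c = 1`
otherwise. -/
theorem stmt6 (d n : ℕ) (A : Matrix (Fin d) (Fin n) ℤ)
    (hrank : (A.map (Int.cast : ℤ → ℚ)).rank = d)
    (hunimod : ∀ g : Fin d → Fin n, Function.Injective g →
      (A.submatrix id g).det ∈ ({-1, 0, 1} : Set ℤ))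
    (ι : Fin d → ℤ) (hgcd : Finset.univ.gcd ι = 1)
    (hinner : ∀ x ∈ posCone (fun c i => (A i c : ℝ)) Set.univ, 0 ≤ ∑ i, (ι i : ℝ) * x i)
    (f : Set (Fin d → ℝ))
    (hf : f = posCone (fun c i => (A i c : ℝ)) Set.univ ∩ {x | ∑ i, (ι i : ℝ) * x i = 0})
    (hfacet : Module.finrank ℝ ↥(Submodule.span ℝ f) = d - 1)
    (j : Fin n) :
    ((fun i => (A i j : ℝ)) ∈ f → ∑ i, ι i * A i j = 0) ∧
    ((fun i => (A i j : ℝ)) ∉ f → ∑ i, ι i * A i j = 1) := by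
  classical
  set col : Fin n → (Fin d → ℝ) := fun c i => (A i c : ℝ) with hcoldef
  -- every column is in the cone
  have hcone : ∀ i : Fin n, col i ∈ posCone col Set.univ := by
    intro i
    refine ⟨fun k => if k = i then 1 else 0, fun k => by positivity,
      fun k hk => absurd (Set.mem_univ k) hk, ?_⟩
    simp [ite_smul]
  -- membership in f iff the integer inner product vanishes
  have hzero : ∀ i : Fin n, col i ∈ f ↔ (∑ r, ι r * A r i) = 0 := by
    intro i
    rw [hf]
    constructor
    · rintro ⟨-, h2⟩
      have : ((∑ r, ι r * A r i : ℤ) : ℝ) = 0 := by push_cast; exact h2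
      exact_mod_cast this
    · intro h
      refine ⟨hcone i, ?_⟩
      show ∑ r, (ι r : ℝ) * (A r i : ℝ) = 0
      have : ((∑ r, ι r * A r i : ℤ) : ℝ) = 0 := by exact_mod_cast h
      push_cast at this
      exact this
  have hnonneg : ∀ i : Fin n, 0 ≤ ∑ r, ι r * A r i := by
    intro i
    have := hinner (col i) (hcone i)
    have h2 : (0 : ℝ) ≤ ((∑ r, ι r * A r i : ℤ) : ℝ) := by push_cast; exact this
    exact_mod_cast h2
  refine ⟨fun h => (hzero j).1 h, fun hj => ?_⟩
  set s : ℤ := ∑ r, ι r * A r j with hs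
  have hspos : 0 < s :=
    lt_of_le_of_ne (hnonneg j) (fun h => hj ((hzero j).2 h.symm))
  -- d = m + 1
  obtain ⟨m, rfl⟩ : ∃ m, d = m + 1 := by
    cases d with
    | zero => simp [Finset.univ_eq_empty] at hgcd
    | succ m => exact ⟨m, rfl⟩
  have hfacet' : Module.finrank ℝ ↥(Submodule.span ℝ f) = m := by simpa using hfacet
  -- the linear functional
  set φ : (Fin (m+1) → ℝ) →ₗ[ℝ] ℝ :=
    { toFun := fun x => ∑ r, (ι r : ℝ) * x r
      map_add' := fun x y => by
        simp only [Pi.add_apply, mul_add, Finset.sum_add_distrib]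
      map_smul' := fun c x => by
        simp only [Pi.smul_apply, smul_eq_mul, RingHom.id_apply, Finset.mul_sum]
        exact Finset.sum_congr rfl fun r _ => by ring } with hφdef
  have hφf : ∀ x ∈ f, φ x = 0 := by
    intro x hx; rw [hf] at hx; exact hx.2
  have hφcol : ∀ i : Fin n, φ (col i) = ((∑ r, ι r * A r i : ℤ) : ℝ) := by
    intro i; show ∑ r, (ι r : ℝ) * (A r i : ℝ) = _; push_cast; rfl
  have hφj : φ (col j) ≠ 0 := by
    rw [hφcol j, ← hs]
    exact_mod_cast hspos.ne'
  -- span f equals span of the columns lying in f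
  set T : Set (Fin (m+1) → ℝ) := col '' {i | col i ∈ f} with hTdef
  have hTsub : T ⊆ f := by rintro x ⟨i, hi, rfl⟩; exact hi
  have hTspan : Submodule.span ℝ T = Submodule.span ℝ f := by
    refine le_antisymm (Submodule.span_mono hTsub) (Submodule.span_le.2 ?_)
    intro x hx
    have hx' := hx
    rw [hf] at hx'
    obtain ⟨⟨lam, hl0, -, rfl⟩, hxin⟩ := hx'
    have hswap : ∑ r, (ι r : ℝ) * (∑ i, lam i • col i) r
        = ∑ i, lam i * φ (col i) := by
      simp only [Finset.sum_apply, Pi.smul_apply, smul_eq_mul, Finset.mul_sum]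
      rw [Finset.sum_comm]
      refine Finset.sum_congr rfl fun i _ => ?_
      show _ = lam i * ∑ r, (ι r : ℝ) * (A r i : ℝ)
      rw [Finset.mul_sum]
      exact Finset.sum_congr rfl fun r _ => by ring
    have hzero' : ∀ i ∈ Finset.univ, lam i * φ (col i) = 0 := by
      rw [← Finset.sum_eq_zero_iff_of_nonneg]
      · rw [← hswap]; exact hxin
      · intro i _
        exact mul_nonneg (hl0 i) (hinner (col i) (hcone i))
    refine Submodule.sum_mem _ fun i _ => ?_
    by_cases hli : lam i = 0
    · simp [hli]
    · have : φ (col i) = 0 := by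
        have := hzero' i (Finset.mem_univ i)
        exact (mul_eq_zero.1 this).resolve_left hli
      have hcf : col i ∈ f := by rw [hf]; exact ⟨hcone i, this⟩
      exact Submodule.smul_mem _ _ (Submodule.subset_span ⟨i, hcf, rfl⟩)
  -- extract m linearly independent columns in f
  obtain ⟨b, hbT, hbspan, hbind⟩ := exists_linearIndependent ℝ T
  have hbfin : b.Finite := hbind.setFinite
  have : Fintype b := hbfin.fintype
  have hbcard : Fintype.card b = m := by
    have h1 := finrank_span_set_eq_card hbind
    rw [hbspan, hTspan, hfacet'] at h1
    rw [← Set.toFinset_card, ← h1]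
  let e : Fin m ≃ b := (Fintype.equivFinOfCardEq hbcard).symm
  set w : Fin m → (Fin (m+1) → ℝ) := fun k => (e k : Fin (m+1) → ℝ) with hwdef
  have hw_ind : LinearIndependent ℝ w := hbind.comp e e.injective
  have hw_range : Set.range w = b := by
    have h0 : Set.range w = Set.range ((Subtype.val : b → (Fin (m+1) → ℝ)) ∘ e) := rfl
    rw [h0, Set.range_comp, Equiv.range_eq_univ, Set.image_univ, Subtype.range_coe]
  have hw_mem : ∀ k, w k ∈ f := fun k => hTsub (hbT (e k).2)
  have hw_col : ∀ k, ∃ i : Fin n, col i = w k := by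
    intro k
    obtain ⟨i, -, hi⟩ := hbT (e k).2
    exact ⟨i, hi⟩
  choose g hg using hw_col
  -- the index map
  set G : Fin (m+1) → Fin n := Fin.cons j g with hGdef
  have hGinj : Function.Injective G := by
    intro a b hab
    induction a using Fin.cases with
    | zero =>
      induction b using Fin.cases with
      | zero => rfl
      | succ b' =>
        exfalso
        apply hj
        simp only [hGdef, Fin.cons_zero, Fin.cons_succ] at hab
        have hcw : col j = w b' := by rw [← hg b', hab]
        show col j ∈ f
        rw [hcw]
        exact hw_mem b'
    | succ a' =>
      induction b using Fin.cases with
      | zero =>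
        exfalso
        apply hj
        simp only [hGdef, Fin.cons_zero, Fin.cons_succ] at hab
        have hcw : col j = w a' := by rw [← hg a', hab]
        show col j ∈ f
        rw [hcw]
        exact hw_mem a'
      | succ b' =>
        simp only [hGdef, Fin.cons_succ] at hab
        have h1 : w a' = w b' := by rw [← hg a', ← hg b', hab]
        rw [hw_ind.injective h1]
  have hMdet := hunimod G hGinj
  set M : Matrix (Fin (m+1)) (Fin (m+1)) ℤ := A.submatrix id G with hMdef
  -- columns of M over ℝ
  have hcolM : ∀ k, (fun i => ((M i k : ℤ) : ℝ)) = col (G k) := by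
    intro k; rfl
  -- det M ≠ 0
  -- the real columns of M form the family `Fin.cons (col j) w`
  have hvM : (fun k => (M.map (Int.cast : ℤ → ℝ)).transpose k) = Fin.cons (col j) w := by
    funext k
    induction k using Fin.cases with
    | zero =>
      funext i
      simp [hMdef, hGdef, Matrix.transpose_apply, Matrix.map_apply,
        Matrix.submatrix_apply, Fin.cons_zero]
      rfl
    | succ k' =>
      have := hg k'
      funext i
      simp only [Fin.cons_succ, Matrix.transpose_apply, Matrix.map_apply,
        Matrix.submatrix_apply, hMdef, hGdef, id]
      exact congrFun (hg k') i
  have hspanwle : Submodule.span ℝ (Set.range w) ≤ LinearMap.ker φ := by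
    rw [hw_range, hbspan, hTspan]
    exact Submodule.span_le.2 fun x hx => hφf x hx
  have hconsind : LinearIndependent ℝ (Fin.cons (col j) w :
      Fin (m+1) → (Fin (m+1) → ℝ)) := by
    rw [linearIndependent_fin_cons]
    refine ⟨hw_ind, fun hmem => hφj ?_⟩
    exact hspanwle hmem
  have hdetM_ne : M.det ≠ 0 := by
    have hind : LinearIndependent ℝ (fun k => (M.map (Int.cast : ℤ → ℝ)).transpose k) := by
      rw [hvM]; exact hconsind
    have hunit : IsUnit (M.map (Int.cast : ℤ → ℝ)) :=
      Matrix.linearIndependent_cols_iff_isUnit.1 hind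
    have hdet : IsUnit (M.map (Int.cast : ℤ → ℝ)).det :=
      (Matrix.isUnit_iff_isUnit_det _).1 hunit
    have h1 : ((M.det : ℤ) : ℝ) ≠ 0 := by
      have h2 : ((M.det : ℤ) : ℝ) = (M.map (Int.cast : ℤ → ℝ)).det := by
        simpa using RingHom.map_det (Int.castRingHom ℝ) M
      rw [h2]
      exact hdet.ne_zero
    exact_mod_cast h1
  -- Bezout vector
  obtain ⟨cc, hcc⟩ := bezout_fin (Finset.univ : Finset (Fin (m+1))) ι
  rw [hgcd] at hcc
  set u : Fin (m+1) → ℤ := cc with hudef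
  have hu : ∑ r, ι r * u r = 1 := by
    rw [← hcc]; exact Finset.sum_congr rfl fun r _ => (mul_comm _ _)
  set l : Fin (m+1) → ℤ := fun i => A i j - s * u i with hldef
  have hl : ∑ r, ι r * l r = 0 := by
    simp only [hldef, mul_sub]
    rw [Finset.sum_sub_distrib]
    have : ∑ r, ι r * (s * u r) = s * ∑ r, ι r * u r := by
      rw [Finset.mul_sum]; exact Finset.sum_congr rfl fun r _ => by ring
    rw [this, hu, hs]; ring
  -- decompose det
  have hdecomp : M.det = s * (M.updateCol 0 u).det + (M.updateCol 0 l).det := by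
    have hM0 : M = M.updateCol 0 ((s • u) + l) := by
      ext i k
      rw [Matrix.updateCol_apply]
      split_ifs with h
      · subst h
        show A i (G 0) = s * u i + (A i j - s * u i)
        rw [hGdef]
        simp [Fin.cons_zero]
      · rfl
    conv_lhs => rw [hM0]
    rw [Matrix.det_updateCol_add, Matrix.det_updateCol_smul]
  have hl_det : (M.updateCol 0 l).det = 0 := by
    by_contra hne
    set N := (M.updateCol 0 l).map (Int.cast : ℤ → ℝ) with hNdef
    have hNdet : N.det ≠ 0 := by
      have h2 : (((M.updateCol 0 l).det : ℤ) : ℝ) = N.det := by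
        simpa [hNdef] using RingHom.map_det (Int.castRingHom ℝ) (M.updateCol 0 l)
      rw [← h2]
      exact_mod_cast hne
    have hunit : IsUnit N := (Matrix.isUnit_iff_isUnit_det _).2 (isUnit_iff_ne_zero.2 hNdet)
    have hind : LinearIndependent ℝ (fun k => N.transpose k) :=
      Matrix.linearIndependent_cols_iff_isUnit.2 hunit
    -- all columns of N lie in ker φ
    have hmem : ∀ k, N.transpose k ∈ LinearMap.ker φ := by
      intro k
      induction k using Fin.cases with
      | zero =>
        have hNc : N.transpose 0 = fun i => ((l i : ℤ) : ℝ) := by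
          funext i
          simp [hNdef, Matrix.transpose_apply, Matrix.map_apply,
            Matrix.updateCol_apply]
        rw [hNc, LinearMap.mem_ker]
        show ∑ r, (ι r : ℝ) * ((l r : ℤ) : ℝ) = 0
        have : ((∑ r, ι r * l r : ℤ) : ℝ) = 0 := by rw [hl]; simp
        push_cast at this
        exact this
      | succ k' =>
        have hNc : N.transpose k'.succ = w k' := by
          funext i
          have hgk := hg k'
          simp only [hNdef, Matrix.transpose_apply, Matrix.map_apply,
            Matrix.updateCol_apply, if_neg (Fin.succ_ne_zero k'), hMdef,
            Matrix.submatrix_apply, hGdef, Fin.cons_succ, id]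
          exact congrFun (hg k') i
        rw [hNc, LinearMap.mem_ker]
        exact hφf _ (hw_mem k')
    have hle : Submodule.span ℝ (Set.range fun k => N.transpose k) ≤ LinearMap.ker φ :=
      Submodule.span_le.2 (by rintro x ⟨k, rfl⟩; exact hmem k)
    have h1 : Module.finrank ℝ (Submodule.span ℝ (Set.range fun k => N.transpose k)) = m + 1 := by
      rw [finrank_span_eq_card hind, Fintype.card_fin]
    have h2 : Module.finrank ℝ (LinearMap.ker φ) < m + 1 := by
      have hproper : LinearMap.ker φ < ⊤ := by
        rw [lt_top_iff_ne_top]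
        intro htop
        exact hφj (LinearMap.mem_ker.1 (htop ▸ Submodule.mem_top))
      have := Submodule.finrank_lt hproper.ne
      rwa [Module.finrank_fintype_fun_eq_card, Fintype.card_fin] at this
    have h3 := Submodule.finrank_mono hle
    omega
  rw [hl_det, add_zero] at hdecomp
  have hdvd : s ∣ M.det := ⟨_, hdecomp⟩
  have hsu : IsUnit s := by
    rcases hMdet with h | h | h
    · exact isUnit_of_dvd_unit hdvd (by rw [h]; exact (IsUnit.neg isUnit_one))
    · exact absurd h hdetM_ne
    · exact isUnit_of_dvd_unit hdvd (by rw [h]; exact isUnit_one)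
  rcases Int.isUnit_iff.1 hsu with h | h
  · exact h
  · omega
end

section
/- Let m ≥ 3 and fix d = (d_1, ..., d_m) ∈ ℕ^m with Σ d_i even, satisfying Σ_{i=2}^m d_i ≥ d_1 and d_1 + d_ℓ ≥ Σ_{i=2, i≠ℓ}^m d_i for every 2 ≤ ℓ ≤ m. Then the number of loopless multigraphs on vertices v_1,...,v_m with degree sequence d equals C((−d_1 + d_2 + ... + d_m)/2 + C(m−1,2) − 1, C(m−1,2) − 1). -/
open Finset


lemma aux_card_sum (α : Type*) [Fintype α] [DecidableEq α] (n : ℕ) :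
    Nat.card {f : α → ℕ // ∑ a, f a = n} = (Fintype.card α + n - 1).choose n := by
  rw [Nat.card_congr (Sym.equivNatSumOfFintype α n).symm, Nat.card_eq_fintype_card,
    Sym.card_sym_eq_choose]

lemma aux_card_pairs (α : Type*) [Fintype α] [LinearOrder α] :
    Fintype.card {p : α × α // p.1 < p.2} = (Fintype.card α).choose 2 := by
  classical
  have e : {a : Sym2 α // ¬ a.IsDiag} ≃ {p : α × α // p.1 < p.2} :=
    (Sym2.sortEquiv.subtypeEquiv (q := fun b => b.val.1 < b.val.2) (fun a => by
      induction a using Sym2.ind with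
      | _ x y => simp [inf_lt_sup, eq_comm])).trans
      (Equiv.subtypeSubtypeEquivSubtype (fun {x} h => le_of_lt h))
  rw [← Fintype.card_congr e, Sym2.card_subtype_not_diag]

lemma handshake {γ : Type*} [Fintype γ] {m : ℕ} (g : γ → Fin m × Fin m)
    (hg : ∀ c, (g c).1 ≠ (g c).2) (y : γ → ℕ) :
    ∑ j : Fin m, ∑ c : γ, (if (g c).1 = j ∨ (g c).2 = j then y c else 0)
      = 2 * ∑ c, y c := by
  rw [Finset.sum_comm, Finset.mul_sum]
  refine Finset.sum_congr rfl fun c _ => ?_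
  have h := hg c
  calc ∑ j, (if (g c).1 = j ∨ (g c).2 = j then y c else 0)
      = ∑ j, ((if (g c).1 = j then y c else 0) + (if (g c).2 = j then y c else 0)) := by
        refine Finset.sum_congr rfl fun j _ => ?_
        by_cases h1 : (g c).1 = j <;> by_cases h2 : (g c).2 = j <;> simp_all
    _ = 2 * y c := by
        rw [Finset.sum_add_distrib, Finset.sum_ite_eq, Finset.sum_ite_eq]
        simp [two_mul]

abbrev Pr (m : ℕ) : Type := {p : Fin m × Fin m // p.1 < p.2}

def zv (m : ℕ) (hm : 0 < m) : Fin m := ⟨0, hm⟩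

abbrev Inn (m : ℕ) (hm : 0 < m) : Type := {q : Pr m // ¬ q.val.1 = zv m hm}

lemma p2_ne (m : ℕ) (hm : 0 < m) (p : Pr m) : ¬ p.val.2 = zv m hm := by
  intro h
  have h2 := p.2
  rw [h] at h2
  exact Nat.not_lt_zero _ (Fin.lt_def.mp h2)

def zEdge (m : ℕ) (hm : 0 < m) (ℓ : Fin m) (hℓ : ¬ ℓ = zv m hm) : Pr m :=
  ⟨(zv m hm, ℓ), by
    have : ℓ.val ≠ 0 := fun h => hℓ (Fin.ext h)
    exact Fin.lt_def.mpr (Nat.pos_of_ne_zero this)⟩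

def zEquiv (m : ℕ) (hm : 0 < m) :
    {ℓ : Fin m // ¬ ℓ = zv m hm} ≃ {p : Pr m // p.val.1 = zv m hm} where
  toFun ℓ := ⟨zEdge m hm ℓ.val ℓ.2, rfl⟩
  invFun p := ⟨p.val.val.2, p2_ne m hm p.val⟩
  left_inv ℓ := rfl
  right_inv p := by
    apply Subtype.ext; apply Subtype.ext
    exact Prod.ext p.2.symm rfl

lemma split_sum (m : ℕ) (hm : 0 < m) (f : Pr m → ℕ) :
    ∑ p : Pr m, f p
      = (∑ ℓ : {ℓ : Fin m // ¬ ℓ = zv m hm}, f (zEdge m hm ℓ.val ℓ.2))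
        + ∑ q : Inn m hm, f q.val := by
  rw [← Fintype.sum_subtype_add_sum_subtype (fun p : Pr m => p.val.1 = zv m hm) f]
  congr 1
  exact (Equiv.sum_comp (zEquiv m hm) (fun p => f p.val)).symm

lemma deg_z (m : ℕ) (hm : 0 < m) (x : Pr m → ℕ) :
    ∑ p : Pr m, (if p.val.1 = zv m hm ∨ p.val.2 = zv m hm then x p else 0)
      = ∑ ℓ : {ℓ : Fin m // ¬ ℓ = zv m hm}, x (zEdge m hm ℓ.val ℓ.2) := by
  have h1 : ∀ p : Pr m, (if p.val.1 = zv m hm ∨ p.val.2 = zv m hm then x p else 0)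
      = (if p.val.1 = zv m hm then x p else 0) := by
    intro p
    by_cases h : p.val.1 = zv m hm <;> simp [h, p2_ne m hm p]
  rw [Finset.sum_congr rfl fun p _ => h1 p,
    split_sum m hm (fun p => if p.val.1 = zv m hm then x p else 0)]
  have h2 : ∀ ℓ : {ℓ : Fin m // ¬ ℓ = zv m hm},
      (if (zEdge m hm ℓ.val ℓ.2).val.1 = zv m hm then x (zEdge m hm ℓ.val ℓ.2) else 0)
        = x (zEdge m hm ℓ.val ℓ.2) := fun ℓ => if_pos rfl
  rw [Finset.sum_congr rfl fun ℓ _ => h2 ℓ]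
  have h3 : ∀ q : Inn m hm,
      (if q.val.val.1 = zv m hm then x q.val else 0) = 0 := fun q => if_neg q.2
  rw [Finset.sum_congr rfl fun q _ => h3 q]
  simp

lemma deg_ne (m : ℕ) (hm : 0 < m) (x : Pr m → ℕ) (j : Fin m) (hj : ¬ j = zv m hm) :
    ∑ p : Pr m, (if p.val.1 = j ∨ p.val.2 = j then x p else 0)
      = x (zEdge m hm j hj)
        + ∑ q : Inn m hm, (if q.val.val.1 = j ∨ q.val.val.2 = j then x q.val else 0) := by
  rw [split_sum m hm (fun p => if p.val.1 = j ∨ p.val.2 = j then x p else 0)]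
  congr 1
  have h1 : ∀ ℓ : {ℓ : Fin m // ¬ ℓ = zv m hm},
      (if (zEdge m hm ℓ.val ℓ.2).val.1 = j ∨ (zEdge m hm ℓ.val ℓ.2).val.2 = j
        then x (zEdge m hm ℓ.val ℓ.2) else 0)
      = (if ℓ = (⟨j, hj⟩ : {ℓ : Fin m // ¬ ℓ = zv m hm})
          then x (zEdge m hm ℓ.val ℓ.2) else 0) := by
    intro ℓ
    have hz : ¬ (zv m hm = j) := fun h => hj h.symm
    have : ((zv m hm = j ∨ ℓ.val = j)) ↔ ℓ = ⟨j, hj⟩ := by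
      constructor
      · rintro (h | h)
        · exact absurd h hz
        · exact Subtype.ext h
      · intro h; right; rw [h]
    simp only [zEdge]
    exact if_congr this rfl rfl
  rw [Finset.sum_congr rfl fun ℓ _ => h1 ℓ]
  simp [Finset.sum_ite_eq']

def DI (m : ℕ) (hm : 0 < m) (y : Inn m hm → ℕ) (j : Fin m) : ℕ :=
  ∑ q : Inn m hm, if q.val.val.1 = j ∨ q.val.val.2 = j then y q else 0

lemma DI_le_sum (m : ℕ) (hm : 0 < m) (y : Inn m hm → ℕ) (j : Fin m) :
    DI m hm y j ≤ ∑ q, y q :=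
  Finset.sum_le_sum fun q _ => by split <;> simp

lemma DI_z (m : ℕ) (hm : 0 < m) (y : Inn m hm → ℕ) : DI m hm y (zv m hm) = 0 := by
  refine Finset.sum_eq_zero fun q _ => ?_
  have : ¬ (q.val.val.1 = zv m hm ∨ q.val.val.2 = zv m hm) := by
    rintro (h | h)
    · exact q.2 h
    · exact p2_ne m hm q.val h
  rw [if_neg this]

lemma sum_DI (m : ℕ) (hm : 0 < m) (y : Inn m hm → ℕ) :
    ∑ j : Fin m, DI m hm y j = 2 * ∑ q, y q :=
  handshake (fun q : Inn m hm => q.val.val) (fun q => ne_of_lt q.val.2) y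

lemma sum_subtype_ne (m : ℕ) (hm : 0 < m) (d : Fin m → ℕ) :
    ∑ ℓ : {ℓ : Fin m // ¬ ℓ = zv m hm}, d ℓ.val
      = ∑ i ∈ univ.erase (zv m hm), d i := by
  rw [eq_comm]
  apply Finset.sum_subtype
  intro i
  simp [Finset.mem_erase]

lemma sum_DI_ne (m : ℕ) (hm : 0 < m) (y : Inn m hm → ℕ) :
    ∑ ℓ : {ℓ : Fin m // ¬ ℓ = zv m hm}, DI m hm y ℓ.val = 2 * ∑ q, y q := by
  rw [sum_subtype_ne m hm (DI m hm y)]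
  have h0 := Finset.add_sum_erase univ (DI m hm y) (Finset.mem_univ (zv m hm))
  have h1 := DI_z m hm y
  have h2 := sum_DI m hm y
  omega

lemma inner_sum_eq (m : ℕ) (hm : 0 < m) (d : Fin m → ℕ) (x : Pr m → ℕ)
    (hx : ∀ j, (∑ p : Pr m, if p.val.1 = j ∨ p.val.2 = j then x p else 0) = d j) :
    2 * ∑ q : Inn m hm, x q.val + 2 * d (zv m hm) = ∑ i, d i := by
  have h1 := handshake (fun p : Pr m => p.val) (fun p => ne_of_lt p.2) x
  have h2 : ∑ j, d j = 2 * ∑ p : Pr m, x p := by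
    rw [← h1]; exact (Finset.sum_congr rfl fun j _ => (hx j).symm)
  have h3 := split_sum m hm x
  have h4 := hx (zv m hm)
  rw [deg_z m hm x] at h4
  omega

def bwdFun (m : ℕ) (hm : 0 < m) (d : Fin m → ℕ) (y : Inn m hm → ℕ) : Pr m → ℕ :=
  fun p => if h : p.val.1 = zv m hm then d p.val.2 - DI m hm y p.val.2 else y ⟨p, h⟩

lemma bwdFun_zEdge (m : ℕ) (hm : 0 < m) (d : Fin m → ℕ) (y : Inn m hm → ℕ)
    (ℓ : Fin m) (hℓ : ¬ ℓ = zv m hm) :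
    bwdFun m hm d y (zEdge m hm ℓ hℓ) = d ℓ - DI m hm y ℓ := dif_pos rfl

lemma bwdFun_inner (m : ℕ) (hm : 0 < m) (d : Fin m → ℕ) (y : Inn m hm → ℕ)
    (q : Inn m hm) : bwdFun m hm d y q.val = y q := dif_neg q.2

lemma fwd_zEdge (m : ℕ) (hm : 0 < m) (d : Fin m → ℕ) (x : Pr m → ℕ)
    (hx : ∀ j, (∑ p : Pr m, if p.val.1 = j ∨ p.val.2 = j then x p else 0) = d j)
    (j : Fin m) (hj : ¬ j = zv m hm) :
    x (zEdge m hm j hj) + DI m hm (fun q => x q.val) j = d j := by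
  have h := hx j
  rw [deg_ne m hm x j hj] at h
  exact h

lemma bwd_deg (m : ℕ) (hm : 0 < m) (d : Fin m → ℕ) (s : ℕ)
    (hkey : 2 * s + 2 * d (zv m hm) = ∑ i, d i)
    (hsd : ∀ ℓ : Fin m, ¬ ℓ = zv m hm → s ≤ d ℓ)
    (y : Inn m hm → ℕ) (hy : ∑ q, y q = s) :
    ∀ j, (∑ p : Pr m, if p.val.1 = j ∨ p.val.2 = j then bwdFun m hm d y p else 0) = d j := by
  have hDle : ∀ j : Fin m, ¬ j = zv m hm → DI m hm y j ≤ d j := fun j hj =>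
    le_trans (le_trans (DI_le_sum m hm y j) (le_of_eq hy)) (hsd j hj)
  intro j
  by_cases hj : j = zv m hm
  · subst hj
    rw [deg_z m hm]
    rw [Finset.sum_congr rfl fun ℓ _ => bwdFun_zEdge m hm d y ℓ.val ℓ.2]
    rw [Finset.sum_tsub_distrib (f := fun ℓ : {ℓ : Fin m // ¬ ℓ = zv m hm} => d ℓ.val)
      (g := fun ℓ : {ℓ : Fin m // ¬ ℓ = zv m hm} => DI m hm y ℓ.val) univ
      (fun ℓ _ => hDle ℓ.val ℓ.2)]
    rw [sum_subtype_ne m hm d, sum_DI_ne m hm y, hy]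
    have hE := Finset.add_sum_erase univ d (Finset.mem_univ (zv m hm))
    omega
  · rw [deg_ne m hm _ j hj, bwdFun_zEdge m hm d y j hj]
    have : ∀ q : Inn m hm,
        (if q.val.val.1 = j ∨ q.val.val.2 = j then bwdFun m hm d y q.val else 0)
          = (if q.val.val.1 = j ∨ q.val.val.2 = j then y q else 0) := by
      intro q
      rw [bwdFun_inner m hm d y q]
    rw [Finset.sum_congr rfl fun q _ => this q]
    have h1 : DI m hm y j ≤ d j := hDle j hj
    show d j - DI m hm y j + DI m hm y j = d j
    omega

def innEquiv (m : ℕ) (hm : 0 < m) :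
    Inn m hm ≃ {p : {i : Fin m // ¬ i = zv m hm} × {i : Fin m // ¬ i = zv m hm} // p.1 < p.2} where
  toFun q := ⟨(⟨q.val.val.1, q.2⟩, ⟨q.val.val.2, p2_ne m hm q.val⟩),
    Subtype.mk_lt_mk.mpr q.val.2⟩
  invFun p := ⟨⟨(p.val.1.val, p.val.2.val), p.2⟩, p.val.1.2⟩
  left_inv q := rfl
  right_inv p := rfl

lemma card_Inn (m : ℕ) (hm : 0 < m) : Fintype.card (Inn m hm) = (m - 1).choose 2 := by
  rw [Fintype.card_congr (innEquiv m hm), aux_card_pairs]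
  congr 1
  rw [Fintype.card_subtype_compl, Fintype.card_subtype_eq, Fintype.card_fin]

/-- For `m ≥ 3` and a degree sequence `d` with even sum satisfying
`Σ_{i≥2} dᵢ ≥ d₁` and `d₁ + dₗ ≥ Σ_{i≥2, i≠ℓ} dᵢ` for all `ℓ ≥ 2`, the number of
loopless multigraphs with degree sequence `d` is
`C((-d₁ + d₂ + ⋯ + d_m)/2 + C(m-1,2) - 1, C(m-1,2) - 1)`. -/
theorem stmt19 (m : ℕ) (hm : 3 ≤ m) (d : Fin m → ℕ) (heven : Even (∑ i, d i))
    (h1 : d ⟨0, by omega⟩ ≤ ∑ i ∈ Finset.univ.erase (⟨0, by omega⟩ : Fin m), d i)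
    (h2 : ∀ ℓ : Fin m, ℓ ≠ ⟨0, by omega⟩ →
      ∑ i ∈ (Finset.univ.erase (⟨0, by omega⟩ : Fin m)).erase ℓ, d i ≤
        d ⟨0, by omega⟩ + d ℓ) :
    Nat.card {x : {p : Fin m × Fin m // p.1 < p.2} → ℕ //
        ∀ j : Fin m,
          (∑ p : {p : Fin m × Fin m // p.1 < p.2},
            if p.val.1 = j ∨ p.val.2 = j then x p else 0) = d j} =
      (((∑ i, d i) - 2 * d ⟨0, by omega⟩) / 2 + (m - 1).choose 2 - 1).choose
        ((m - 1).choose 2 - 1) := by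
  classical
  have hm0 : 0 < m := by omega
  have h1' : d (zv m hm0) ≤ ∑ i ∈ univ.erase (zv m hm0), d i := h1
  have h2' : ∀ ℓ : Fin m, ¬ ℓ = zv m hm0 →
      ∑ i ∈ (univ.erase (zv m hm0)).erase ℓ, d i ≤ d (zv m hm0) + d ℓ := h2
  show Nat.card {x : Pr m → ℕ //
        ∀ j : Fin m,
          (∑ p : Pr m, if p.val.1 = j ∨ p.val.2 = j then x p else 0) = d j} =
      (((∑ i, d i) - 2 * d (zv m hm0)) / 2 + (m - 1).choose 2 - 1).choose
        ((m - 1).choose 2 - 1)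
  set T := ∑ i, d i with hT
  set s := (T - 2 * d (zv m hm0)) / 2 with hs
  obtain ⟨t, ht⟩ := heven
  have hE : T = d (zv m hm0) + ∑ i ∈ univ.erase (zv m hm0), d i :=
    (Finset.add_sum_erase univ d (mem_univ _)).symm
  have hkey : 2 * s + 2 * d (zv m hm0) = T := by omega
  have hsd : ∀ ℓ : Fin m, ¬ ℓ = zv m hm0 → s ≤ d ℓ := by
    intro ℓ hℓ
    have hadd : d ℓ + ∑ i ∈ (univ.erase (zv m hm0)).erase ℓ, d i
        = ∑ i ∈ univ.erase (zv m hm0), d i :=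
      Finset.add_sum_erase _ d (Finset.mem_erase.mpr ⟨hℓ, mem_univ ℓ⟩)
    have := h2' ℓ hℓ
    omega
  let E : {x : Pr m → ℕ //
        ∀ j : Fin m,
          (∑ p : Pr m, if p.val.1 = j ∨ p.val.2 = j then x p else 0) = d j}
      ≃ {y : Inn m hm0 → ℕ // ∑ q, y q = s} :=
  { toFun := fun x => ⟨fun q => x.val q.val, by
      show (∑ q : Inn m hm0, x.val q.val) = s
      have := inner_sum_eq m hm0 d x.val x.2
      omega⟩
    invFun := fun y => ⟨bwdFun m hm0 d y.val,
      bwd_deg m hm0 d s hkey hsd y.val y.2⟩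
    left_inv := by
      intro x
      apply Subtype.ext
      funext p
      show bwdFun m hm0 d (fun q => x.val q.val) p = x.val p
      by_cases h : p.val.1 = zv m hm0
      · have hp : p = zEdge m hm0 p.val.2 (p2_ne m hm0 p) :=
          Subtype.ext (Prod.ext h rfl)
        rw [hp, bwdFun_zEdge]
        have := fwd_zEdge m hm0 d x.val x.2 p.val.2 (p2_ne m hm0 p)
        omega
      · exact bwdFun_inner m hm0 d _ ⟨p, h⟩
    right_inv := by
      intro y
      apply Subtype.ext
      funext q
      show bwdFun m hm0 d y.val q.val = y.val q
      exact bwdFun_inner m hm0 d y.val q }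
  rw [Nat.card_congr E, aux_card_sum, card_Inn]
  have hC : 1 ≤ (m - 1).choose 2 := Nat.choose_pos (by omega)
  have h3 : (m - 1).choose 2 + s - 1 = s + (m - 1).choose 2 - 1 := by omega
  rw [h3]
  have h4 : (s + (m - 1).choose 2 - 1) - s = (m - 1).choose 2 - 1 := by omega
  rw [← h4]
  exact (Nat.choose_symm (by omega)).symm
end
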